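/- Let m ≥ 1 be an integer, let p₁, …, p_m be pairwise distinct prime numbers, and let C be a real number with 0 < C < m. Then there is no polynomial g ∈ ℝ[x₁, …, x_m] such that for every tuple (a₁, …, a_m) of positive integers one has max_{1 ≤ j ≤ m} a_j^{p_j} ≤ g(a₁, …, a_m) ≤ C · max_{1 ≤ j ≤ m} a_j^{p_j}. -/

import Mathlib

open Filter Finset Polynomial

lemma tendsto_eval_div_pow (h : Polynomial ℝ) (d : ℕ) (hd : h.natDegree ≤ d) :
    Tendsto (fun n : ℕ => h.eval (n : ℝ) / (n : ℝ) ^ d) atTop (nhds (h.coeff d)) := by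
  have key : Tendsto (fun x : ℝ => h.eval x / x ^ d) atTop (nhds (h.coeff d)) := by
    have T : Tendsto (fun x : ℝ => ∑ k ∈ range (d + 1), h.coeff k * x ^ k / x ^ d)
        atTop (nhds (∑ k ∈ range (d + 1), if k = d then h.coeff d else 0)) := by
      apply tendsto_finset_sum
      intro k hk
      by_cases hkd : k = d
      · subst hkd
        simp only [if_pos rfl]
        apply Tendsto.congr' _ tendsto_const_nhds
        filter_upwards [eventually_ge_atTop (1:ℝ)] with x hx
        have hx0 : x ^ k ≠ 0 := pow_ne_zero _ (by linarith)
        rw [mul_div_assoc, div_self hx0, mul_one]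
        simp
      · simp only [if_neg hkd]
        have hklt : k < d := lt_of_le_of_ne (Nat.lt_succ_iff.mp (mem_range.mp hk)) hkd
        apply Tendsto.congr' (f₁ := fun x : ℝ => h.coeff k / x ^ (d - k))
        · filter_upwards [eventually_ge_atTop (1:ℝ)] with x hx
          have hx0 : x ^ k ≠ 0 := pow_ne_zero _ (by linarith)
          have hxd : x ^ d = x ^ k * x ^ (d - k) := by
            rw [← pow_add]; congr 1; omega
          rw [hxd, mul_comm (h.coeff k) (x ^ k), mul_div_mul_left _ _ hx0]
        · exact Tendsto.div_atTop tendsto_const_nhds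
            (tendsto_pow_atTop (by omega : d - k ≠ 0))
    rw [Finset.sum_ite_eq' (range (d+1)) d, if_pos (self_mem_range_succ d)] at T
    apply T.congr'
    filter_upwards [eventually_ge_atTop (1:ℝ)] with x hx
    rw [Polynomial.eval_eq_sum_range' (Nat.lt_succ_of_le hd), Finset.sum_div]
  exact key.comp tendsto_natCast_atTop_atTop

lemma natDegree_le_of_growth (h : Polynomial ℝ) (C : ℝ) (d : ℕ)
    (hb : ∀ n : ℕ, 1 ≤ n → |h.eval (n : ℝ)| ≤ C * (n : ℝ) ^ d) : h.natDegree ≤ d := by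
  by_contra hlt
  push_neg at hlt
  have h0 : h ≠ 0 := by
    rintro rfl
    simp at hlt
  have t1 := (tendsto_eval_div_pow h h.natDegree le_rfl).abs
  have hub : ∀ᶠ n : ℕ in atTop, |h.eval (n:ℝ) / (n : ℝ) ^ h.natDegree| ≤ C / (n:ℝ) := by
    filter_upwards [eventually_ge_atTop 1] with n hn
    have hn1 : (1:ℝ) ≤ (n:ℝ) := by exact_mod_cast hn
    have hn0 : (0:ℝ) < (n:ℝ) := lt_of_lt_of_le one_pos hn1
    rw [abs_div, abs_pow, abs_of_pos hn0, div_le_div_iff₀ (pow_pos hn0 _) hn0]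
    calc |h.eval (n:ℝ)| * (n:ℝ) ≤ (C * (n:ℝ) ^ d) * (n:ℝ) := by
          have := hb n hn
          have : 0 ≤ |h.eval (n:ℝ)| := abs_nonneg _
          nlinarith [hb n hn]
      _ = C * (n:ℝ) ^ (d + 1) := by ring
      _ ≤ C * (n:ℝ) ^ h.natDegree := by
          have hCpos : 0 ≤ C := le_trans (abs_nonneg _) (by simpa using hb 1 le_rfl)
          exact mul_le_mul_of_nonneg_left (pow_le_pow_right₀ hn1 (by omega)) hCpos
  have hz : |h.coeff h.natDegree| ≤ 0 :=
    le_of_tendsto_of_tendsto t1 (tendsto_const_div_atTop_nhds_zero_nat C) hub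
  have : h.leadingCoeff = 0 := by
    have := abs_nonneg (h.coeff h.natDegree)
    have : h.coeff h.natDegree = 0 := abs_eq_zero.mp (le_antisymm hz this)
    rwa [Polynomial.leadingCoeff]
  exact h0 (Polynomial.leadingCoeff_eq_zero.mp this)

lemma coeff_ge_of_lb (h : Polynomial ℝ) (d : ℕ) (hd : h.natDegree ≤ d)
    (hlb : ∀ n : ℕ, 1 ≤ n → (n : ℝ) ^ d ≤ h.eval (n : ℝ)) : 1 ≤ h.coeff d := by
  refine ge_of_tendsto (tendsto_eval_div_pow h d hd) ?_
  filter_upwards [eventually_ge_atTop 1] with n hn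
  have hn1 : (1:ℝ) ≤ (n:ℝ) := by exact_mod_cast hn
  rw [le_div_iff₀ (pow_pos (by linarith) d), one_mul]
  exact hlb n hn

lemma coeff_le_of_ub (h : Polynomial ℝ) (C : ℝ) (d : ℕ) (hd : h.natDegree ≤ d)
    (hub : ∀ n : ℕ, 1 ≤ n → h.eval (n : ℝ) ≤ C * (n : ℝ) ^ d) : h.coeff d ≤ C := by
  refine le_of_tendsto (tendsto_eval_div_pow h d hd) ?_
  filter_upwards [eventually_ge_atTop 1] with n hn
  have hn1 : (1:ℝ) ≤ (n:ℝ) := by exact_mod_cast hn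
  rw [div_le_iff₀ (pow_pos (by linarith) d)]
  exact hub n hn

lemma evalH {m : ℕ} (g : MvPolynomial (Fin m) ℝ) (s : Fin m → ℕ) (x : ℝ) :
    Polynomial.eval x (MvPolynomial.aeval (fun i => (Polynomial.X : Polynomial ℝ) ^ s i) g)
      = MvPolynomial.eval (fun i => x ^ s i) g := by
  induction g using MvPolynomial.induction_on with
  | C a => simp
  | add q r hq hr => simp [hq, hr]
  | mul_X q i hq => simp [hq]

lemma coeffH {m : ℕ} (g : MvPolynomial (Fin m) ℝ) (s : Fin m → ℕ) (d : ℕ) :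
    (MvPolynomial.aeval (fun i => (Polynomial.X : Polynomial ℝ) ^ s i) g).coeff d
      = ∑ α ∈ g.support, if (∑ i, s i * α i) = d then MvPolynomial.coeff α g else 0 := by
  conv_lhs => rw [g.as_sum]
  rw [map_sum, Polynomial.finset_sum_coeff]
  refine Finset.sum_congr rfl fun α hα => ?_
  rw [MvPolynomial.aeval_monomial]
  rw [Finsupp.prod_pow]
  have : (∏ i, ((Polynomial.X : Polynomial ℝ) ^ s i) ^ α i)
      = (Polynomial.X : Polynomial ℝ) ^ (∑ i, s i * α i) := by
    rw [← Finset.prod_pow_eq_pow_sum]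
    exact Finset.prod_congr rfl fun i _ => by rw [← pow_mul]
  rw [this]
  rw [Polynomial.algebraMap_eq, Polynomial.coeff_C_mul, Polynomial.coeff_X_pow]
  clear this hα; split_ifs with h1 h2 <;> simp_all

lemma sum_eq_one_nat {m : ℕ} (β : Fin m → ℕ) (h : ∑ i, β i = 1) :
    ∃ j, β j = 1 ∧ ∀ i, i ≠ j → β i = 0 := by
  have hex : ∃ j, β j ≠ 0 := by
    by_contra hc
    push_neg at hc
    simp [hc] at h
  obtain ⟨j, hj⟩ := hex
  refine ⟨j, ?_, ?_⟩
  · have h1 : β j ≤ 1 := h ▸ Finset.single_le_sum (fun i _ => Nat.zero_le _) (Finset.mem_univ j)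
    omega
  · intro i hi
    have hsplit : β j + ∑ k ∈ Finset.univ.erase j, β k = 1 := by
      rw [Finset.add_sum_erase _ _ (Finset.mem_univ j)]; exact h
    have h2 : β i ≤ ∑ k ∈ Finset.univ.erase j, β k :=
      Finset.single_le_sum (fun k _ => Nat.zero_le _) (Finset.mem_erase.mpr ⟨hi, Finset.mem_univ i⟩)
    omega

lemma NT {m : ℕ} (p : Fin m → ℕ) (hprime : ∀ j, (p j).Prime) (hdist : Function.Injective p)
    (α : Fin m →₀ ℕ) (q : Fin m → ℕ)
    (hq : ∀ i, q i = ∏ l ∈ Finset.univ.erase i, p l)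
    (h : ∑ i, q i * α i = ∏ l, p l) :
    ∃ j, α = Finsupp.single j (p j) := by
  have hqp : ∀ i, q i * p i = ∏ l, p l := fun i => by
    rw [hq i]; exact Finset.prod_erase_mul _ _ (Finset.mem_univ i)
  have hdvd : ∀ k, p k ∣ α k := by
    intro k
    have hsplit : q k * α k + ∑ i ∈ Finset.univ.erase k, q i * α i = ∏ l, p l := by
      rw [Finset.add_sum_erase _ (fun i => q i * α i) (Finset.mem_univ k)]; exact h
    have hrest : p k ∣ ∑ i ∈ Finset.univ.erase k, q i * α i := by
      refine Finset.dvd_sum fun i hi => Dvd.dvd.mul_right ?_ _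
      rw [hq i]
      exact Finset.dvd_prod_of_mem _ (Finset.mem_erase.mpr
        ⟨(Finset.mem_erase.mp hi).1.symm, Finset.mem_univ k⟩)
    have hL : p k ∣ ∏ l, p l := Finset.dvd_prod_of_mem _ (Finset.mem_univ k)
    have hqk : p k ∣ q k * α k := by
      rw [← hsplit] at hL
      exact (Nat.dvd_add_right hrest).mp (by rwa [add_comm] at hL)
    have hcop : Nat.Coprime (p k) (q k) := by
      rw [hq k]
      refine Nat.Coprime.prod_right fun l hl => ?_
      exact (Nat.coprime_primes (hprime k) (hprime l)).mpr
        fun he => (Finset.mem_erase.mp hl).1 (hdist he).symm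
    exact hcop.dvd_of_dvd_mul_left hqk
  have hαβ : ∀ i, α i = p i * (α i / p i) := fun i => (Nat.mul_div_cancel' (hdvd i)).symm
  have hsum : (∏ l, p l) * ∑ i, α i / p i = (∏ l, p l) * 1 := by
    rw [mul_one]
    calc (∏ l, p l) * ∑ i, α i / p i = ∑ i, (∏ l, p l) * (α i / p i) := Finset.mul_sum _ _ _
      _ = ∑ i, q i * α i := Finset.sum_congr rfl fun i _ => by
            rw [← hqp i]; conv_rhs => rw [hαβ i]
            ring
      _ = ∏ l, p l := h
  have hL0 : 0 < ∏ l, p l := Finset.prod_pos fun l _ => (hprime l).pos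
  have hone : ∑ i, α i / p i = 1 := Nat.eq_of_mul_eq_mul_left hL0 hsum
  obtain ⟨j, hj1, hj0⟩ := sum_eq_one_nat _ hone
  refine ⟨j, Finsupp.ext fun i => ?_⟩
  rcases eq_or_ne i j with rfl | hij
  · rw [Finsupp.single_apply, if_pos rfl]
    conv_lhs => rw [hαβ i, hj1, mul_one]
  · rw [Finsupp.single_apply, if_neg (Ne.symm hij), hαβ i, hj0 i hij, mul_zero]

theorem stmt6 (m : ℕ) (hm : 1 ≤ m) (p : Fin m → ℕ)
    (hprime : ∀ j, (p j).Prime) (hdist : Function.Injective p)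
    (C : ℝ) (hC0 : 0 < C) (hCm : C < m) :
    ¬ ∃ g : MvPolynomial (Fin m) ℝ,
      ∀ a : Fin m → ℕ, (∀ j, 1 ≤ a j) →
        (Finset.univ.sup' (Finset.univ_nonempty_iff.mpr ⟨⟨0, hm⟩⟩)
            (fun j => ((a j : ℝ)) ^ (p j)) ≤ MvPolynomial.eval (fun j => ((a j : ℝ))) g) ∧
        (MvPolynomial.eval (fun j => ((a j : ℝ))) g ≤
          C * Finset.univ.sup' (Finset.univ_nonempty_iff.mpr ⟨⟨0, hm⟩⟩)
            (fun j => ((a j : ℝ)) ^ (p j))) := by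
  rintro ⟨g, hg⟩
  -- generic curve bounds
  have curve : ∀ (s : Fin m → ℕ) (d : ℕ), (∀ i, s i * p i ≤ d) → (∀ j0 : Fin m, s j0 * p j0 = d →
      (∀ n : ℕ, 1 ≤ n →
        (n : ℝ) ^ d ≤ (MvPolynomial.aeval
            (fun i => (Polynomial.X : Polynomial ℝ) ^ s i) g).eval (n : ℝ) ∧
        (MvPolynomial.aeval (fun i => (Polynomial.X : Polynomial ℝ) ^ s i) g).eval (n : ℝ)
          ≤ C * (n : ℝ) ^ d)) := by
    intro s d hle j0 hj0 n hn
    have ha1 : ∀ i, 1 ≤ n ^ s i := fun i => Nat.one_le_pow _ _ (by omega)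
    obtain ⟨hlo, hhi⟩ := hg (fun i => n ^ s i) ha1
    have hcast : (fun i : Fin m => ((n ^ s i : ℕ) : ℝ)) = fun i => (n : ℝ) ^ s i := by
      funext i; push_cast; ring
    have hcast2 : (fun j : Fin m => ((n ^ s j : ℕ) : ℝ) ^ p j)
        = fun j => ((n : ℝ) ^ s j) ^ p j := by
      funext i; push_cast; ring
    rw [hcast, hcast2] at hlo hhi
    rw [evalH]
    have hn1 : (1:ℝ) ≤ (n:ℝ) := by exact_mod_cast hn
    have hsup_le : Finset.univ.sup' (Finset.univ_nonempty_iff.mpr ⟨⟨0, hm⟩⟩)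
        (fun i => ((n:ℝ) ^ s i) ^ p i) ≤ (n:ℝ) ^ d := by
      apply Finset.sup'_le
      intro i _
      rw [← pow_mul]
      exact pow_le_pow_right₀ hn1 (hle i)
    have hsup_ge : (n:ℝ) ^ d ≤ Finset.univ.sup' (Finset.univ_nonempty_iff.mpr ⟨⟨0, hm⟩⟩)
        (fun i => ((n:ℝ) ^ s i) ^ p i) := by
      refine le_trans ?_ (Finset.le_sup' _ (Finset.mem_univ j0))
      rw [← pow_mul, hj0]
    refine ⟨le_trans hsup_ge hlo, le_trans hhi ?_⟩
    exact mul_le_mul_of_nonneg_left hsup_le (le_of_lt hC0)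
  -- step 1: each pure coefficient is ≥ 1
  have hsingle : ∀ j, 1 ≤ MvPolynomial.coeff (Finsupp.single j (p j)) g := by
    intro j
    set N : ℕ := g.totalDegree + (∑ i, p i) + 1 with hN
    set s : Fin m → ℕ := fun i => if i = j then N else 1 with hs
    have hle : ∀ i, s i * p i ≤ N * p j := by
      intro i
      rcases eq_or_ne i j with rfl | hij
      · simp [hs]
      · simp only [hs, if_neg hij, one_mul]
        have h1 : p i ≤ ∑ k, p k :=
          Finset.single_le_sum (f := p) (fun k _ => Nat.zero_le _) (Finset.mem_univ i)
        have h2 : p i ≤ N := by omega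
        exact le_trans h2 (Nat.le_mul_of_pos_right _ (hprime j).pos)
    have hcb := curve s (N * p j) hle j (by simp [hs])
    have hdeg : (MvPolynomial.aeval
        (fun i => (Polynomial.X : Polynomial ℝ) ^ s i) g).natDegree ≤ N * p j := by
      apply natDegree_le_of_growth _ C
      intro n hn
      obtain ⟨h1, h2⟩ := hcb n hn
      have : (0:ℝ) ≤ (n:ℝ) ^ (N * p j) := by positivity
      rw [abs_of_nonneg (by linarith)]
      exact h2
    have hco := coeff_ge_of_lb _ _ hdeg (fun n hn => (hcb n hn).1)
    rw [coeffH] at hco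
    have hiff : ∀ α ∈ g.support,
        ((∑ i, s i * α i) = N * p j) ↔ α = Finsupp.single j (p j) := by
      intro α hα
      constructor
      · intro hsum
        have hdecomp : s j * α j + ∑ i ∈ Finset.univ.erase j, s i * α i = N * p j := by
          rw [Finset.add_sum_erase _ (fun i => s i * α i) (Finset.mem_univ j)]; exact hsum
        have hsj : s j = N := by simp [hs]
        have hsi : ∀ i ∈ Finset.univ.erase j, s i * α i = α i := by
          intro i hi
          simp [hs, (Finset.mem_erase.mp hi).1]
        rw [hsj, Finset.sum_congr rfl hsi] at hdecomp
        have htot : ∑ i, α i ≤ g.totalDegree := by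
          have h1 := MvPolynomial.le_totalDegree hα
          rwa [Finsupp.sum_fintype _ _ (fun _ => rfl)] at h1
        have hR : ∑ i ∈ Finset.univ.erase j, α i ≤ g.totalDegree := by
          refine le_trans ?_ htot
          exact Finset.sum_le_sum_of_subset (Finset.erase_subset _ _)
        have hRN : ∑ i ∈ Finset.univ.erase j, α i < N := by omega
        have hNpos : 0 < N := by omega
        have hαj : α j = p j := by
          have hle1 : α j ≤ p j :=
            Nat.le_of_mul_le_mul_left (Nat.le.intro hdecomp) hNpos
          have hge1 : p j ≤ α j := by
            have e1 : N * (α j + 1) = N * α j + N := by ring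
            have e2 : N * p j < N * (α j + 1) := by
              rw [e1, ← hdecomp]
              exact Nat.add_lt_add_left hRN _
            have := Nat.lt_of_mul_lt_mul_left e2
            omega
          omega
        have hRzero : ∑ i ∈ Finset.univ.erase j, α i = 0 := by
          rw [hαj] at hdecomp
          have h3 : N * p j + ∑ i ∈ Finset.univ.erase j, α i = N * p j + 0 := by
            rw [Nat.add_zero]; exact hdecomp
          exact Nat.add_left_cancel h3
        have hzero : ∀ i, i ≠ j → α i = 0 := by
          intro i hi
          have := Finset.sum_eq_zero_iff.mp hRzero i
            (Finset.mem_erase.mpr ⟨hi, Finset.mem_univ i⟩)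
          exact this
        refine Finsupp.ext fun i => ?_
        rcases eq_or_ne i j with rfl | hij
        · simp [hαj]
        · simp [Finsupp.single_apply, Ne.symm hij, hzero i hij]
      · rintro rfl
        have : ∀ i, s i * (Finsupp.single j (p j)) i = if j = i then N * p j else 0 := by
          intro i
          rcases eq_or_ne j i with rfl | hij
          · simp [hs]
          · simp [Finsupp.single_apply, hij]
        rw [Finset.sum_congr rfl (fun i _ => this i), Finset.sum_ite_eq _ j _,
          if_pos (Finset.mem_univ j)]
    calc (1:ℝ) ≤ ∑ α ∈ g.support,
          if (∑ i, s i * α i) = N * p j then MvPolynomial.coeff α g else 0 := hco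
      _ = ∑ α ∈ g.support,
          if α = Finsupp.single j (p j) then MvPolynomial.coeff α g else 0 :=
            Finset.sum_congr rfl fun α hα => if_congr (hiff α hα) rfl rfl
      _ = MvPolynomial.coeff (Finsupp.single j (p j)) g := by
            rw [Finset.sum_ite_eq' g.support (Finsupp.single j (p j))]
            split_ifs with hmem
            · rfl
            · exact (MvPolynomial.notMem_support_iff.mp hmem).symm
  -- step 2: sum of pure coefficients ≤ C
  set q : Fin m → ℕ := fun i => ∏ l ∈ Finset.univ.erase i, p l with hq
  set L : ℕ := ∏ l, p l with hL
  have hqp : ∀ i, q i * p i = L := fun i =>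
    Finset.prod_erase_mul _ _ (Finset.mem_univ i)
  have hcb := curve q L (fun i => le_of_eq (hqp i)) ⟨0, hm⟩ (hqp _)
  have hdeg : (MvPolynomial.aeval
      (fun i => (Polynomial.X : Polynomial ℝ) ^ q i) g).natDegree ≤ L := by
    apply natDegree_le_of_growth _ C
    intro n hn
    obtain ⟨h1, h2⟩ := hcb n hn
    have : (0:ℝ) ≤ (n:ℝ) ^ L := by positivity
    rw [abs_of_nonneg (by linarith)]
    exact h2
  have hDle := coeff_le_of_ub _ C _ hdeg (fun n hn => (hcb n hn).2)
  rw [coeffH] at hDle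
  have hsinglemem : ∀ j : Fin m, (∑ i, q i * (Finsupp.single j (p j)) i) = L := by
    intro j
    have : ∀ i, q i * (Finsupp.single j (p j)) i = if j = i then L else 0 := by
      intro i
      rcases eq_or_ne j i with rfl | hij
      · simp [hqp]
      · simp [Finsupp.single_apply, hij]
    rw [Finset.sum_congr rfl (fun i _ => this i), Finset.sum_ite_eq _ j _,
      if_pos (Finset.mem_univ j)]
  have hinj : Function.Injective (fun j : Fin m => Finsupp.single j (p j)) := by
    intro j j' hjj
    by_contra hne
    have hjj' : Finsupp.single j (p j) = Finsupp.single j' (p j') := hjj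
    have h1 := DFunLike.congr_fun hjj' j
    rw [Finsupp.single_eq_same, Finsupp.single_eq_of_ne hne] at h1
    exact (hprime j).pos.ne' h1
  have hDeq : (∑ α ∈ g.support,
      if (∑ i, q i * α i) = L then MvPolynomial.coeff α g else 0)
      = ∑ j, MvPolynomial.coeff (Finsupp.single j (p j)) g := by
    have hsub : (g.support.filter fun α => (∑ i, q i * α i) = L)
        ⊆ Finset.univ.image fun j => Finsupp.single j (p j) := by
      intro α hα
      obtain ⟨hα1, hα2⟩ := Finset.mem_filter.mp hα
      obtain ⟨j, rfl⟩ := NT p hprime hdist α q (fun i => rfl) hα2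
      exact Finset.mem_image.mpr ⟨j, Finset.mem_univ j, rfl⟩
    have hz : ∀ α ∈ Finset.univ.image fun j : Fin m => Finsupp.single j (p j),
        α ∉ (g.support.filter fun α => (∑ i, q i * α i) = L) →
        MvPolynomial.coeff α g = 0 := by
      intro α hα hnα
      obtain ⟨j, _, rfl⟩ := Finset.mem_image.mp hα
      have hns : (Finsupp.single j (p j)) ∉ g.support := by
        intro hmem
        exact hnα (Finset.mem_filter.mpr ⟨hmem, hsinglemem j⟩)
      exact MvPolynomial.notMem_support_iff.mp hns
    rw [← Finset.sum_filter, Finset.sum_subset hsub hz,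
      Finset.sum_image fun j _ j' _ h => hinj h]
  rw [hDeq] at hDle
  have hmge : (m:ℝ) ≤ ∑ j, MvPolynomial.coeff (Finsupp.single j (p j)) g := by
    calc (m:ℝ) = ∑ _j : Fin m, (1:ℝ) := by simp
      _ ≤ _ := Finset.sum_le_sum fun j _ => hsingle j
  linarith
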